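/- Let 2 < p < q and let (a,b,c) ∈ ℝ × ℝ × (0,∞) satisfy a + b = c and a·p = c·q. Define f : [0,∞) → ℝ by f(x) = a·x^p + b for x > 1 and f(x) = c·x^q for 0 ≤ x ≤ 1. Then there exists K > 0 such that for all nonnegative reals x, y: f(x) − f(y) − f'(y)·(x−y) ≥ K · min(|x−y|^p, |x−y|^q). -/

import Mathlib

open Set Real Filter

private lemma superadd (x y s : ℝ) (hx : 0 ≤ x) (hy : 0 ≤ y) (hs : 1 ≤ s) :
    x ^ s + y ^ s ≤ (x + y) ^ s := by
  lift x to NNReal using hx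
  lift y to NNReal using hy
  exact_mod_cast NNReal.add_rpow_le_rpow_add x y hs

set_option maxHeartbeats 1600000 in
theorem stmt1 (p q a b c : ℝ) (hp : 2 < p) (hpq : p < q)
    (hc : 0 < c) (habc : a + b = c) (hapcq : a * p = c * q)
    (f : ℝ → ℝ)
    (hf₁ : ∀ x : ℝ, 1 < x → f x = a * x ^ p + b)
    (hf₂ : ∀ x : ℝ, 0 ≤ x → x ≤ 1 → f x = c * x ^ q) :
    ∃ K > (0:ℝ), ∀ x y : ℝ, 0 ≤ x → 0 ≤ y →
      f x - f y - deriv f y * (x - y) ≥ K * min (|x - y| ^ p) (|x - y| ^ q) := by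
  have hp0 : (0:ℝ) < p := by linarith
  have hq0 : (0:ℝ) < q := by linarith
  have hq1 : (1:ℝ) ≤ q - 1 := by linarith
  have hp1 : (1:ℝ) ≤ p - 1 := by linarith
  have ha : 0 < a := by nlinarith
  set g : ℝ → ℝ := fun t => if t ≤ 1 then c * q * t ^ (q - 1) else a * p * t ^ (p - 1)
    with hgdef
  -- derivative of f at positive points
  have hfg : ∀ t : ℝ, 0 < t → HasDerivAt f (g t) t := by
    intro t ht
    rcases lt_trichotomy t 1 with h1 | h1 | h1
    · have hev : f =ᶠ[nhds t] fun x => c * x ^ q := by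
        filter_upwards [Ioo_mem_nhds ht h1] with x hx
        exact hf₂ x hx.1.le hx.2.le
      have hd : HasDerivAt (fun x => c * x ^ q) (c * (q * t ^ (q - 1))) t :=
        (Real.hasDerivAt_rpow_const (Or.inl ht.ne')).const_mul c
      have : HasDerivAt f (c * (q * t ^ (q - 1))) t := hd.congr_of_eventuallyEq hev
      simpa [hgdef, h1.le, mul_assoc] using this
    · subst h1
      have hdl : HasDerivWithinAt f (c * q) (Iic 1) 1 := by
        have hd : HasDerivAt (fun x => c * x ^ q) (c * (q * (1:ℝ) ^ (q - 1))) 1 :=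
          (Real.hasDerivAt_rpow_const (Or.inl one_ne_zero)).const_mul c
        have hd' : HasDerivWithinAt (fun x => c * x ^ q) (c * q) (Iic 1) 1 := by
          simpa using hd.hasDerivWithinAt
        refine hd'.congr_of_eventuallyEq ?_ (by simpa using (hf₂ 1 zero_le_one le_rfl))
        filter_upwards [inter_mem_nhdsWithin (Iic 1) (Ioi_mem_nhds (by norm_num : (0:ℝ) < 1))]
          with x hx
        exact hf₂ x hx.2.le hx.1
      have hdr : HasDerivWithinAt f (c * q) (Ici 1) 1 := by
        have hd : HasDerivAt (fun x => a * x ^ p + b) (a * (p * (1:ℝ) ^ (p - 1))) 1 :=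
          ((Real.hasDerivAt_rpow_const (Or.inl one_ne_zero)).const_mul a).add_const b
        have hd' : HasDerivWithinAt (fun x => a * x ^ p + b) (c * q) (Ici 1) 1 := by
          have heq : a * (p * (1:ℝ) ^ (p - 1)) = c * q := by
            rw [Real.one_rpow]; linarith [hapcq]
          have h0 : HasDerivWithinAt (fun x => a * x ^ p + b)
              (a * (p * (1:ℝ) ^ (p - 1))) (Ici 1) 1 := hd.hasDerivWithinAt
          rwa [heq] at h0
        refine hd'.congr_of_eventuallyEq ?_ ?_
        · filter_upwards [self_mem_nhdsWithin] with x (hx : 1 ≤ x)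
          rcases eq_or_lt_of_le hx with h | h
          · rw [← h, hf₂ 1 zero_le_one le_rfl]; simp; linarith
          · exact hf₁ x h
        · rw [hf₂ 1 zero_le_one le_rfl]; simp; linarith
      have := (hdl.union hdr)
      rw [Iic_union_Ici] at this
      have h := this.hasDerivAt (by simp)
      simpa [hgdef] using h
    · have hev : f =ᶠ[nhds t] fun x => a * x ^ p + b := by
        filter_upwards [Ioi_mem_nhds h1] with x hx
        exact hf₁ x hx
      have hd : HasDerivAt (fun x => a * x ^ p + b) (a * (p * t ^ (p - 1))) t :=
        ((Real.hasDerivAt_rpow_const (Or.inl ht.ne')).const_mul a).add_const b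
      have : HasDerivAt f (a * (p * t ^ (p - 1))) t := hd.congr_of_eventuallyEq hev
      simpa [hgdef, not_le.mpr h1, mul_assoc] using this
  -- deriv f y = g y for y ≥ 0
  have hderiv : ∀ y : ℝ, 0 ≤ y → deriv f y = g y := by
    intro y hy
    rcases eq_or_lt_of_le hy with h0 | h0
    · subst h0
      have hg0 : g 0 = 0 := by
        simp [hgdef, Real.zero_rpow (by linarith : q - 1 ≠ 0)]
      rw [hg0]
      by_cases hd : DifferentiableAt ℝ f 0
      · have h1 : HasDerivWithinAt f (deriv f 0) (Ici 0) 0 :=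
          hd.hasDerivAt.hasDerivWithinAt
        have h2 : HasDerivWithinAt f 0 (Ici 0) 0 := by
          have hcq : HasDerivAt (fun x : ℝ => c * x ^ q) (c * (q * (0:ℝ) ^ (q - 1))) 0 :=
            (Real.hasDerivAt_rpow_const (Or.inr (by linarith))).const_mul c
          have hz : c * (q * (0:ℝ) ^ (q - 1)) = 0 := by
            rw [Real.zero_rpow (by linarith : q - 1 ≠ 0)]; ring
          have hcq' : HasDerivWithinAt (fun x : ℝ => c * x ^ q)
              (c * (q * (0:ℝ) ^ (q - 1))) (Ici 0) 0 := hcq.hasDerivWithinAt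
          rw [hz] at hcq'
          refine hcq'.congr_of_eventuallyEq ?_ (by simpa using hf₂ 0 le_rfl zero_le_one)
          filter_upwards [inter_mem_nhdsWithin (Ici 0) (Iio_mem_nhds (by norm_num : (0:ℝ) < 1))]
            with x hx
          exact hf₂ x hx.1 hx.2.le
        have u := uniqueDiffOn_Ici (0:ℝ) 0 self_mem_Ici
        rw [← h1.derivWithin u, h2.derivWithin u]
      · exact deriv_zero_of_not_differentiableAt hd
    · exact (hfg y h0).deriv
  -- increment lemma for g
  have hA : ∀ y h : ℝ, 0 ≤ y → 0 ≤ h →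
      c * q * min ((h / 2) ^ (p - 1)) ((h / 2) ^ (q - 1)) ≤ g (y + h) - g y := by
    intro y h hy hh
    have hcq : 0 < c * q := by positivity
    have hh2 : 0 ≤ h / 2 := by linarith
    by_cases hyh : y + h ≤ 1
    · have hy1 : y ≤ 1 := by linarith
      have hsup : y ^ (q - 1) + h ^ (q - 1) ≤ (y + h) ^ (q - 1) := superadd y h _ hy hh hq1
      have h2h : (h / 2) ^ (q - 1) ≤ h ^ (q - 1) :=
        Real.rpow_le_rpow hh2 (by linarith) (by linarith)
      have hmin : min ((h / 2) ^ (p - 1)) ((h / 2) ^ (q - 1)) ≤ h ^ (q - 1) :=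
        le_trans (min_le_right _ _) h2h
      have : g (y + h) - g y = c * q * ((y + h) ^ (q - 1) - y ^ (q - 1)) := by
        simp [hgdef, hyh, hy1]; ring
      rw [this]
      have hstep : h ^ (q - 1) ≤ (y + h) ^ (q - 1) - y ^ (q - 1) := by linarith
      have := mul_le_mul_of_nonneg_left (le_trans hmin hstep) hcq.le
      linarith
    · push_neg at hyh
      by_cases hy1 : y ≤ 1
      · -- cross case
        set h₁ := 1 - y with hh₁
        set h₂ := y + h - 1 with hh₂
        have hh₁0 : 0 ≤ h₁ := by rw [hh₁]; linarith
        have hh₂0 : 0 ≤ h₂ := by rw [hh₂]; linarith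
        have hsum : h₁ + h₂ = h := by rw [hh₁, hh₂]; ring
        have e : g (y + h) - g y
            = a * p * ((y + h) ^ (p - 1) - 1) + c * q * (1 - y ^ (q - 1)) := by
          simp [hgdef, not_le.mpr hyh, hy1]
          rw [hapcq]; ring
        have t1 : a * p * h₂ ^ (p - 1) ≤ a * p * ((y + h) ^ (p - 1) - 1) := by
          have : (1:ℝ) ^ (p - 1) + h₂ ^ (p - 1) ≤ (1 + h₂) ^ (p - 1) :=
            superadd 1 h₂ _ zero_le_one hh₂0 hp1
          rw [Real.one_rpow] at this
          have h1h : (1:ℝ) + h₂ = y + h := by rw [hh₂]; ring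
          rw [h1h] at this
          have := mul_le_mul_of_nonneg_left (by linarith : h₂ ^ (p-1) ≤ (y+h)^(p-1) - 1)
            (by positivity : (0:ℝ) ≤ a * p)
          linarith
        have t2 : c * q * h₁ ^ (q - 1) ≤ c * q * (1 - y ^ (q - 1)) := by
          have : y ^ (q - 1) + h₁ ^ (q - 1) ≤ (y + h₁) ^ (q - 1) :=
            superadd y h₁ _ hy hh₁0 hq1
          have hy1' : y + h₁ = 1 := by rw [hh₁]; ring
          rw [hy1', Real.one_rpow] at this
          have := mul_le_mul_of_nonneg_left (by linarith : h₁ ^ (q-1) ≤ 1 - y^(q-1)) hcq.le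
          linarith
        have pos1 : 0 ≤ a * p * h₂ ^ (p - 1) := by positivity
        have pos2 : 0 ≤ c * q * h₁ ^ (q - 1) := by positivity
        rcases le_or_gt (h / 2) h₂ with hc2 | hc2
        · have : (h / 2) ^ (p - 1) ≤ h₂ ^ (p - 1) :=
            Real.rpow_le_rpow hh2 hc2 (by linarith)
          have hm : min ((h / 2) ^ (p - 1)) ((h / 2) ^ (q - 1)) ≤ h₂ ^ (p - 1) :=
            le_trans (min_le_left _ _) this
          have := mul_le_mul_of_nonneg_left hm hcq.le
          rw [e]
          have hcqap : c * q = a * p := hapcq.symm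
          nlinarith [t1, t2, pos1, pos2]
        · have hc1 : h / 2 ≤ h₁ := by
            have : h₂ < h / 2 := hc2
            linarith [hsum]
          have : (h / 2) ^ (q - 1) ≤ h₁ ^ (q - 1) :=
            Real.rpow_le_rpow hh2 hc1 (by linarith)
          have hm : min ((h / 2) ^ (p - 1)) ((h / 2) ^ (q - 1)) ≤ h₁ ^ (q - 1) :=
            le_trans (min_le_right _ _) this
          have := mul_le_mul_of_nonneg_left hm hcq.le
          rw [e]
          nlinarith [t1, t2, pos1, pos2]
      · push_neg at hy1
        have hyh1 : ¬ (y + h ≤ 1) := by linarith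
        have hsup : y ^ (p - 1) + h ^ (p - 1) ≤ (y + h) ^ (p - 1) := superadd y h _ hy hh hp1
        have h2h : (h / 2) ^ (p - 1) ≤ h ^ (p - 1) :=
          Real.rpow_le_rpow hh2 (by linarith) (by linarith)
        have hmin : min ((h / 2) ^ (p - 1)) ((h / 2) ^ (q - 1)) ≤ h ^ (p - 1) :=
          le_trans (min_le_left _ _) h2h
        have e : g (y + h) - g y = a * p * ((y + h) ^ (p - 1) - y ^ (p - 1)) := by
          simp [hgdef, hyh1, not_le.mpr hy1]; ring
        rw [e, ← hapcq]
        have hstep : h ^ (p - 1) ≤ (y + h) ^ (p - 1) - y ^ (p - 1) := by linarith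
        have := mul_le_mul_of_nonneg_left (le_trans hmin hstep)
          (by positivity : (0:ℝ) ≤ a * p)
        linarith
  -- monotonicity of g on [0,∞)
  have hmono : ∀ s t : ℝ, 0 ≤ s → s ≤ t → g s ≤ g t := by
    intro s t hs hst
    have h := hA s (t - s) hs (by linarith)
    have hm : 0 ≤ min (((t - s) / 2) ^ (p - 1)) (((t - s) / 2) ^ (q - 1)) :=
      le_min (Real.rpow_nonneg (by linarith) _) (Real.rpow_nonneg (by linarith) _)
    have : s + (t - s) = t := by ring
    rw [this] at h
    nlinarith [mul_pos hc hq0]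
  -- continuity of f on [0,∞)
  have hcont : ContinuousOn f (Ici 0) := by
    intro t ht
    rcases eq_or_lt_of_le (mem_Ici.mp ht : (0:ℝ) ≤ t) with h0 | h0
    · subst h0
      have hcq : ContinuousAt (fun x : ℝ => c * x ^ q) 0 :=
        continuousAt_const.mul (Real.continuousAt_rpow_const 0 q (Or.inr hq0.le))
      refine (hcq.continuousWithinAt).congr_of_eventuallyEq ?_
        (by simpa using hf₂ 0 le_rfl zero_le_one)
      filter_upwards [inter_mem_nhdsWithin (Ici 0) (Iio_mem_nhds (by norm_num : (0:ℝ) < 1))]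
        with x hx
      exact hf₂ x hx.1 hx.2.le
    · exact ((hfg t h0).continuousAt).continuousWithinAt
  -- MVT helper
  have hslope : ∀ u v : ℝ, 0 ≤ u → u < v → ∃ ξ ∈ Ioo u v, f v - f u = g ξ * (v - u) := by
    intro u v hu huv
    obtain ⟨ξ, hξ, hξ'⟩ := exists_hasDerivAt_eq_slope f g huv
      (hcont.mono (fun z hz => le_trans hu hz.1))
      (fun z hz => hfg z (lt_of_le_of_lt hu hz.1))
    refine ⟨ξ, hξ, ?_⟩
    rw [hξ', div_mul_cancel₀ _ (by linarith : v - u ≠ 0)]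
  -- key arithmetic estimate
  have branch : ∀ d r : ℝ, 0 < d → 0 < r → r ≤ q →
      2 * c * q / (4:ℝ) ^ q * (d ^ r) ≤ d / 2 * (c * q * (d / 2 / 2) ^ (r - 1)) := by
    intro d r hd hr hrq
    have h24 : d / 2 / 2 = d / 4 := by ring
    rw [h24, Real.div_rpow hd.le (by norm_num : (0:ℝ) ≤ 4)]
    have hdr : d ^ (r - 1) * d = d ^ r := by
      rw [← Real.rpow_add_one hd.ne']; ring_nf
    have h4r : (4:ℝ) ^ (r - 1) * 4 = 4 ^ r := by
      rw [← Real.rpow_add_one (by norm_num : (4:ℝ) ≠ 0)]; ring_nf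
    have h4q : (4:ℝ) ^ r ≤ 4 ^ q := Real.rpow_le_rpow_of_exponent_le (by norm_num) hrq
    have h4pos : (0:ℝ) < 4 ^ (r - 1) := Real.rpow_pos_of_pos (by norm_num) _
    have h4qpos : (0:ℝ) < 4 ^ q := Real.rpow_pos_of_pos (by norm_num) _
    have hdrpos : 0 < d ^ r := Real.rpow_pos_of_pos hd _
    have e1 : d / 2 * (c * q * (d ^ (r - 1) / 4 ^ (r - 1))) = 2 * c * q * d ^ r / 4 ^ r := by
      rw [← hdr, ← h4r]
      field_simp
      ring
    rw [e1, div_mul_eq_mul_div]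
    gcongr
  have key : ∀ d : ℝ, 0 < d →
      2 * c * q / (4:ℝ) ^ q * min (d ^ p) (d ^ q)
        ≤ d / 2 * (c * q * min ((d / 2 / 2) ^ (p - 1)) ((d / 2 / 2) ^ (q - 1))) := by
    intro d hd
    have hKpos : (0:ℝ) ≤ 2 * c * q / (4:ℝ) ^ q := by positivity
    rcases le_total ((d / 2 / 2) ^ (p - 1)) ((d / 2 / 2) ^ (q - 1)) with h | h
    · rw [min_eq_left h]
      refine le_trans (mul_le_mul_of_nonneg_left (min_le_left _ _) hKpos) ?_
      exact branch d p hd hp0 hpq.le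
    · rw [min_eq_right h]
      refine le_trans (mul_le_mul_of_nonneg_left (min_le_right _ _) hKpos) ?_
      exact branch d q hd hq0 le_rfl
  refine ⟨2 * c * q / (4:ℝ) ^ q, by positivity, ?_⟩
  intro x y hx hy
  rw [ge_iff_le, hderiv y hy]
  rcases lt_trichotomy x y with hxy | hxy | hxy
  · -- x < y
    set d := y - x with hd
    have hd0 : 0 < d := by rw [hd]; linarith
    have habs : |x - y| = d := by rw [abs_of_neg (by linarith : x - y < 0), hd]; ring
    set m := x + d / 2 with hm
    have hm0 : 0 ≤ m := by rw [hm]; linarith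
    have hxm : x < m := by rw [hm]; linarith
    have hmy : m < y := by rw [hm, hd]; linarith
    obtain ⟨ξ₁, hξ₁, e₁⟩ := hslope x m hx hxm
    obtain ⟨ξ₂, hξ₂, e₂⟩ := hslope m y hm0 hmy
    have hmx : m - x = d / 2 := by rw [hm]; ring
    have hym : y - m = d / 2 := by rw [hm, hd]; ring
    have b₁ : f m - f x ≤ g m * (d / 2) := by
      have hg := hmono ξ₁ m (le_trans hx hξ₁.1.le) hξ₁.2.le
      rw [e₁, hmx]
      nlinarith
    have b₂ : f y - f m ≤ g y * (d / 2) := by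
      have hg := hmono ξ₂ y (le_trans hm0 hξ₂.1.le) hξ₂.2.le
      rw [e₂, hym]
      nlinarith
    have hgm : c * q * min ((d / 2 / 2) ^ (p - 1)) ((d / 2 / 2) ^ (q - 1)) ≤ g y - g m := by
      have h := hA m (d / 2) hm0 (by linarith)
      have hmy' : m + d / 2 = y := by rw [hm, hd]; ring
      rwa [hmy'] at h
    rw [habs]
    refine le_trans (key d hd0) ?_
    have hDg : d / 2 * (g y - g m) ≤ f x - f y - g y * (x - y) := by
      have hxyd : x - y = -d := by rw [hd]; ring
      rw [hxyd]
      nlinarith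
    refine le_trans ?_ hDg
    have := mul_le_mul_of_nonneg_left hgm (by linarith : (0:ℝ) ≤ d / 2)
    linarith
  · -- x = y
    subst hxy
    simp [Real.zero_rpow (by linarith : p ≠ 0), Real.zero_rpow (by linarith : q ≠ 0)]
  · -- y < x
    set d := x - y with hd
    have hd0 : 0 < d := by rw [hd]; linarith
    have habs : |x - y| = d := by rw [abs_of_pos (by linarith : 0 < x - y)]
    set m := y + d / 2 with hm
    have hm0 : 0 ≤ m := by rw [hm]; linarith
    have hym : y < m := by rw [hm]; linarith
    have hmx : m < x := by rw [hm, hd]; linarith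
    obtain ⟨ξ₁, hξ₁, e₁⟩ := hslope y m hy hym
    obtain ⟨ξ₂, hξ₂, e₂⟩ := hslope m x hm0 hmx
    have hmy' : m - y = d / 2 := by rw [hm]; ring
    have hxm' : x - m = d / 2 := by rw [hm, hd]; ring
    have b₁ : g y * (d / 2) ≤ f m - f y := by
      have hg := hmono y ξ₁ hy hξ₁.1.le
      rw [e₁, hmy']
      nlinarith
    have b₂ : g m * (d / 2) ≤ f x - f m := by
      have hg := hmono m ξ₂ hm0 hξ₂.1.le
      rw [e₂, hxm']
      nlinarith
    have hgm : c * q * min ((d / 2 / 2) ^ (p - 1)) ((d / 2 / 2) ^ (q - 1)) ≤ g m - g y := by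
      have h := hA y (d / 2) hy (by linarith)
      have hmy'' : y + d / 2 = m := by rw [hm]
      rwa [hmy''] at h
    rw [habs]
    refine le_trans (key d hd0) ?_
    have hDg : d / 2 * (g m - g y) ≤ f x - f y - g y * (x - y) := by
      have hxyd : x - y = d := by rw [hd]
      rw [hxyd]
      nlinarith
    refine le_trans ?_ hDg
    have := mul_le_mul_of_nonneg_left hgm (by linarith : (0:ℝ) ≤ d / 2)
    linarith
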